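/- Let g and f₁,...,fₙ be real-rooted polynomials with positive leading coefficients, and let F = f₁ + f₂ + ⋯ + fₙ. If fᵢ ⪯ g for each i, then F is real-rooted and F ⪯ g. Dually, if g ⪯ fᵢ for each i, then F is real-rooted and g ⪯ F. -/

import Mathlib

open Polynomial

/-- `f` has only real zeros (every complex zero is real). -/
def RealRooted (f : Polynomial ℝ) : Prop :=
  ∀ z : ℂ, z ∈ (f.map (algebraMap ℝ ℂ)).roots → z.im = 0

/-- all zeros of `f` are real (counted with multiplicity). -/
def AllRealRoots (f : Polynomial ℝ) : Prop :=
  f.roots.card = f.natDegree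

/-- two polynomials are compatible if every nonnegative linear combination
has only real zeros. -/
def Compatible (f g : Polynomial ℝ) : Prop :=
  ∀ c d : ℝ, 0 ≤ c → 0 ≤ d → RealRooted (C c * f + C d * g)

/-- `Interlaces g f` means `g ⪯ f`: both are real-rooted with positive leading
coefficients, and listing the zeros in decreasing order `u` (of `f`) and `v`
(of `g`), either `deg f = deg g` and `vₙ ≤ uₙ ≤ ⋯ ≤ v₁ ≤ u₁`, or
`deg f = deg g + 1` and `uₙ ≤ vₙ₋₁ ≤ ⋯ ≤ v₁ ≤ u₁`. -/
def Interlaces (g f : Polynomial ℝ) : Prop :=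
  0 < f.leadingCoeff ∧ 0 < g.leadingCoeff ∧
  ∃ u v : List ℝ,
    u.Pairwise (· ≥ ·) ∧ v.Pairwise (· ≥ ·) ∧
    f.roots = (u : Multiset ℝ) ∧ g.roots = (v : Multiset ℝ) ∧
    u.length = f.natDegree ∧ v.length = g.natDegree ∧
    (u.length = v.length ∨ u.length = v.length + 1) ∧
    (∀ (i : ℕ) (hv : i < v.length) (hu : i < u.length),
      v.get ⟨i, hv⟩ ≤ u.get ⟨i, hu⟩) ∧
    (∀ (i : ℕ) (hu : i + 1 < u.length) (hv : i < v.length),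
      u.get ⟨i + 1, hu⟩ ≤ v.get ⟨i, hv⟩)


namespace SumAux


/-- `w` is squeezed below `u`. -/
def Sq (u w : List ℝ) : Prop :=
  (∀ (i : ℕ) (h1 : i < w.length) (h2 : i < u.length), w[i] ≤ u[i]) ∧
  (∀ (i : ℕ) (h1 : i + 1 < u.length) (h2 : i < w.length), u[i + 1] ≤ w[i])

noncomputable def term (c : ℝ) (v : List ℝ) : Polynomial ℝ :=
  C c * ((v : Multiset ℝ).map fun a => X - C a).prod

lemma natDegree_term (c : ℝ) (hc : c ≠ 0) (v : List ℝ) : (term c v).natDegree = v.length := by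
  rw [term, natDegree_C_mul hc, natDegree_multiset_prod_X_sub_C_eq_card]; simp

lemma roots_term (c : ℝ) (hc : c ≠ 0) (v : List ℝ) : (term c v).roots = ↑v := by
  rw [term, roots_C_mul _ hc, roots_multiset_prod_X_sub_C]

lemma leadingCoeff_term (c : ℝ) (v : List ℝ) : (term c v).leadingCoeff = c := by
  rw [term, leadingCoeff_mul, leadingCoeff_C,
    (monic_multiset_prod_of_monic _ _ fun a _ => monic_X_sub_C a).leadingCoeff, mul_one]

lemma eval_term (c x : ℝ) (v : List ℝ) :
    eval x (term c v) = c * (v.map (fun a => x - a)).prod := by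
  rw [term, eval_mul, eval_C, eval_multiset_prod]
  congr 1
  rw [Multiset.map_map]
  have : (↑(v.map fun a => x - a) : Multiset ℝ).prod = (v.map (fun a => x - a)).prod := by simp
  rw [← this]; congr 1; simp [Function.comp]

lemma sorted_getElem_le {l : List ℝ} (h : l.Pairwise (· ≥ ·)) {i j : ℕ} (hij : i ≤ j)
    (hj : j < l.length) : l[j] ≤ l[i]'(lt_of_le_of_lt hij hj) := by
  rcases hij.lt_or_eq with h' | h'
  · exact (List.pairwise_iff_getElem.1 h) i j _ _ h'
  · subst h'; exact le_rfl

lemma sorted_getElem_lt {l : List ℝ} (h : l.Pairwise (· > ·)) {i j : ℕ} (hij : i < j)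
    (hj : j < l.length) : l[j] < l[i]'(lt_of_le_of_lt hij.le hj) :=
  (List.pairwise_iff_getElem.1 h) i j _ _ hij

lemma list_sum_pos : ∀ l : List ℝ, (∀ x ∈ l, 0 ≤ x) → (∃ x ∈ l, 0 < x) → 0 < l.sum
  | [], _, hex => by simp at hex
  | a :: l, hall, hex => by
    rcases hex with ⟨x, hx, hxpos⟩
    rcases List.mem_cons.1 hx with rfl | hx'
    · have : 0 ≤ l.sum := List.sum_nonneg fun y hy => hall y (List.mem_cons_of_mem _ hy)
      simpa using add_pos_of_pos_of_nonneg hxpos this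
    · have : 0 < l.sum := list_sum_pos l (fun y hy => hall y (List.mem_cons_of_mem _ hy)) ⟨x, hx', hxpos⟩
      have h0 : 0 ≤ a := hall a (List.mem_cons_self)
      simpa using add_pos_of_nonneg_of_pos h0 this

lemma natDegree_list_sum_le' (d : ℕ) : ∀ l : List (Polynomial ℝ),
    (∀ q ∈ l, q.natDegree ≤ d) → l.sum.natDegree ≤ d
  | [], _ => by simp
  | a :: l, h => by
    rw [List.sum_cons]
    exact (natDegree_add_le _ _).trans (max_le (h a (List.mem_cons_self))
      (natDegree_list_sum_le' d l fun q hq => h q (List.mem_cons_of_mem _ hq)))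

lemma coe_list_eraseIdx : ∀ (l : List ℝ) (k : ℕ) (hk : k < l.length),
    (l : Multiset ℝ) = l[k] ::ₘ ↑(l.eraseIdx k)
  | a :: l, 0, _ => by simp
  | a :: l, k + 1, hk => by
    have hk' : k < l.length := by simpa using hk
    have := coe_list_eraseIdx l k hk'
    simp only [List.eraseIdx_cons_succ, List.getElem_cons_succ]
    calc (↑(a :: l) : Multiset ℝ) = a ::ₘ ↑l := by simp
    _ = a ::ₘ (l[k] ::ₘ ↑(l.eraseIdx k)) := by rw [← this]
    _ = l[k] ::ₘ a ::ₘ ↑(l.eraseIdx k) := Multiset.cons_swap _ _ _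
    _ = l[k] ::ₘ ↑(a :: l.eraseIdx k) := by simp

lemma coe_insertIdx : ∀ (l : List ℝ) (p : ℕ) (_ : p ≤ l.length) (t : ℝ),
    (↑(l.insertIdx p t) : Multiset ℝ) = t ::ₘ ↑l
  | l, 0, _, t => by simp
  | [], p + 1, hp, t => by simp at hp
  | a :: l, p + 1, hp, t => by
    have := coe_insertIdx l p (by simpa using hp) t
    simp only [List.insertIdx_succ_cons]
    calc (↑(a :: l.insertIdx p t) : Multiset ℝ) = a ::ₘ ↑(l.insertIdx p t) := by simp
    _ = a ::ₘ t ::ₘ ↑l := by rw [this]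
    _ = t ::ₘ a ::ₘ ↑l := Multiset.cons_swap _ _ _
    _ = t ::ₘ ↑(a :: l) := by simp



lemma kernel (x : ℝ) : ∀ (k : ℕ) (v : List ℝ), k ≤ v.length →
    (∀ (i : ℕ) (h : i < v.length), i < k → x ≤ v[i]) →
    (∀ (i : ℕ) (h : i < v.length), k ≤ i → v[i] ≤ x) →
    0 ≤ (-1 : ℝ) ^ k * (v.map (fun a => x - a)).prod
  | 0, v, _, _, hle => by
    simp only [pow_zero, one_mul]
    refine List.prod_nonneg fun a ha => ?_
    rcases List.mem_map.1 ha with ⟨b, hb, rfl⟩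
    rcases List.mem_iff_getElem.1 hb with ⟨i, hi, rfl⟩
    have := hle i hi (Nat.zero_le _)
    linarith
  | k + 1, [], hk, _, _ => by simp at hk
  | k + 1, a :: v, hk, hge, hle => by
    have ha : x ≤ a := hge 0 (by simp) (Nat.succ_pos _)
    have IH := kernel x k v (by simpa using hk)
      (fun i hi hik => by
        have := hge (i + 1) (by simpa using hi) (by omega)
        simpa using this)
      (fun i hi hik => by
        have := hle (i + 1) (by simpa using hi) (by omega)
        simpa using this)
    have : (-1 : ℝ) ^ (k + 1) * ((a :: v).map (fun a => x - a)).prod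
        = (a - x) * ((-1 : ℝ) ^ k * (v.map (fun a => x - a)).prod) := by
      simp only [List.map_cons, List.prod_cons]
      ring
    rw [this]
    exact mul_nonneg (by linarith) IH

/-- degree/leadingCoeff of a sum of positive-leading polynomials of degrees d or d+1 -/
lemma sum_deg (m : ℕ) (l : List (Polynomial ℝ)) (hne : l ≠ [])
    (h : ∀ q ∈ l, 0 < q.leadingCoeff ∧ (q.natDegree = m ∨ q.natDegree + 1 = m)) :
    0 < l.sum.leadingCoeff ∧ (l.sum.natDegree = m ∨ l.sum.natDegree + 1 = m) := by
  by_cases hex : ∃ q ∈ l, q.natDegree = m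
  case pos =>
    have hcoe : ∀ q ∈ l, 0 ≤ q.coeff m := by
      intro q hq
      rcases (h q hq).2 with h1 | h1
      · rw [← h1, coeff_natDegree]; exact (h q hq).1.le
      · rw [coeff_eq_zero_of_natDegree_lt (by omega)]
    have hsum : l.sum.coeff m = (l.map (fun q => q.coeff m)).sum := by
      have := map_list_sum (lcoeff ℝ m) l
      exact this
    have hpos : 0 < l.sum.coeff m := by
      rw [hsum]
      refine list_sum_pos _ (fun y hy => ?_) ?_
      · rcases List.mem_map.1 hy with ⟨q, hq, rfl⟩; exact hcoe q hq
      · rcases hex with ⟨q, hq, hdq⟩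
        exact ⟨q.coeff m, List.mem_map.2 ⟨q, hq, rfl⟩, by
          rw [← hdq, coeff_natDegree]; exact (h q hq).1⟩
    have hle : l.sum.natDegree ≤ m :=
      natDegree_list_sum_le' m l fun q hq => by rcases (h q hq).2 with h1 | h1 <;> omega
    have hdeg : l.sum.natDegree = m :=
      le_antisymm hle (le_natDegree_of_ne_zero hpos.ne')
    refine ⟨?_, Or.inl hdeg⟩
    rw [leadingCoeff, hdeg]; exact hpos
  case neg =>
    push_neg at hex
    have hall : ∀ q ∈ l, q.natDegree + 1 = m := by
      intro q hq; rcases (h q hq).2 with h1 | h1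
      · exact absurd h1 (hex q hq)
      · exact h1
    have hm : 1 ≤ m := by
      rcases l with _ | ⟨a, l⟩
      · exact absurd rfl hne
      · have := hall a (by simp); omega
    have hcoe : ∀ q ∈ l, 0 < q.coeff (m - 1) := by
      intro q hq
      have h1 := hall q hq
      have : q.natDegree = m - 1 := by omega
      rw [← this, coeff_natDegree]; exact (h q hq).1
    have hsum : l.sum.coeff (m - 1) = (l.map (fun q => q.coeff (m - 1))).sum := by
      have := map_list_sum (lcoeff ℝ (m - 1)) l
      exact this
    have hpos : 0 < l.sum.coeff (m - 1) := by
      rw [hsum]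
      refine list_sum_pos _ (fun y hy => ?_) ?_
      · rcases List.mem_map.1 hy with ⟨q, hq, rfl⟩; exact (hcoe q hq).le
      · rcases l with _ | ⟨a, l⟩
        · exact absurd rfl hne
        · exact ⟨a.coeff (m - 1), List.mem_map.2 ⟨a, by simp, rfl⟩, hcoe a (by simp)⟩
    have hle : l.sum.natDegree ≤ m - 1 :=
      natDegree_list_sum_le' (m - 1) l fun q hq => by have := hall q hq; omega
    have hdeg : l.sum.natDegree = m - 1 :=
      le_antisymm hle (le_natDegree_of_ne_zero hpos.ne')
    refine ⟨?_, Or.inr (by omega)⟩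
    rw [leadingCoeff, hdeg]; exact hpos

lemma length_insertIdx' (l : List ℝ) (t : ℝ) (p : ℕ) (hp : p ≤ l.length) :
    (l.insertIdx p t).length = l.length + 1 := List.length_insertIdx_of_le_length hp t

lemma getElem_insertIdx_gt (l : List ℝ) (t : ℝ) (p i : ℕ) (hp : p ≤ l.length) (hpi : p < i)
    (h2 : i < l.length + 1) :
    (l.insertIdx p t)[i]'(by rw [length_insertIdx' l t p hp]; omega) = l[i - 1]'(by omega) := by
  exact List.getElem_insertIdx_of_gt hpi _

lemma sorted_insertIdx (l : List ℝ) (t : ℝ) (p : ℕ) (hp : p ≤ l.length) (hs : l.Pairwise (· ≥ ·))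
    (h1 : ∀ (i : ℕ) (h : i < l.length), i < p → t ≤ l[i])
    (h2 : ∀ (i : ℕ) (h : i < l.length), p ≤ i → l[i] ≤ t) :
    (l.insertIdx p t).Pairwise (· ≥ ·) := by
  rw [List.pairwise_iff_getElem]
  intro i j hi hj hij
  rw [length_insertIdx' l t p hp] at hi hj
  rcases lt_trichotomy j p with hjp | hjp | hjp
  · rw [List.getElem_insertIdx_of_lt (by omega : i < p),
      List.getElem_insertIdx_of_lt hjp]
    exact sorted_getElem_le hs hij.le (by omega)
  · subst hjp
    rw [List.getElem_insertIdx_of_lt hij,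
      List.getElem_insertIdx_self]
    exact h1 i (by omega) hij
  · rw [getElem_insertIdx_gt l t p j hp hjp hj]
    rcases lt_trichotomy i p with hip | hip | hip
    · rw [List.getElem_insertIdx_of_lt hip]
      exact sorted_getElem_le hs (by omega) (by omega)
    · subst hip
      rw [List.getElem_insertIdx_self]
      exact h2 (j - 1) (by omega) (by omega)
    · rw [getElem_insertIdx_gt l t p i hp hip hi]
      exact sorted_getElem_le hs (by omega) (by omega)

lemma sq_insertIdx (u w' : List ℝ) (j p : ℕ)
    (hu : u.Pairwise (· ≥ ·)) (hj : j < u.length)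
    (hp1 : p ≤ w'.length) (hp2 : p ≤ j) (hp3 : j ≤ p + 1)
    (hge : ∀ (i : ℕ) (h : i < w'.length), i < p → u[j] ≤ w'[i])
    (hle : ∀ (i : ℕ) (h : i < w'.length), p ≤ i → w'[i] ≤ u[j])
    (hsq : Sq (u.eraseIdx j) w') :
    Sq u (w'.insertIdx p u[j]) := by
  have hlu' : (u.eraseIdx j).length = u.length - 1 := List.length_eraseIdx_of_lt hj
  constructor
  · intro i h1 h2
    rw [length_insertIdx' w' _ p hp1] at h1
    rcases lt_trichotomy i p with hip | hip | hip
    · rw [List.getElem_insertIdx_of_lt hip]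
      have := hsq.1 i (by omega) (by omega)
      rwa [List.getElem_eraseIdx_of_lt (l := u) (i := j) (j := i) (by omega) (by omega)] at this
    · subst hip
      rw [List.getElem_insertIdx_self]
      exact sorted_getElem_le hu hp2 hj
    · rw [getElem_insertIdx_gt w' _ p i hp1 hip h1]
      rcases le_or_gt j (i - 1) with hcase | hcase
      · have := hsq.1 (i - 1) (by omega) (by omega)
        rw [List.getElem_eraseIdx_of_ge (l := u) (i := j) (j := (i - 1)) (by omega) hcase] at this
        have he : i - 1 + 1 = i := by omega
        simp only [he] at this
        exact this
      · -- i - 1 = p and j = p + 1, i = j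
        have hip1 : i - 1 = p := by omega
        have hji : j = i := by omega
        have := hle (i - 1) (by omega) (by omega)
        simp only [hji] at this
        exact this
  · intro i h1 h2
    rw [length_insertIdx' w' _ p hp1] at h2
    rcases lt_trichotomy i p with hip | hip | hip
    · rw [List.getElem_insertIdx_of_lt hip]
      rcases lt_trichotomy (i + 1) j with hc | hc | hc
      · have := hsq.2 i (by omega) (by omega)
        rwa [List.getElem_eraseIdx_of_lt (l := u) (i := j) (j := (i + 1)) (by omega) hc] at this
      · have := hge i (by omega) hip
        simp only [← hc] at this
        exact this
      · omega
    · subst hip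
      rw [List.getElem_insertIdx_self]
      exact sorted_getElem_le hu (by omega) h1
    · rw [getElem_insertIdx_gt w' _ p i hp1 hip h2]
      have hij : j ≤ i := by omega
      have := hsq.2 (i - 1) (by omega) (by omega)
      rw [List.getElem_eraseIdx_of_ge (l := u) (i := j) (j := (i - 1 + 1)) (by omega) (by omega)] at this
      have he : i - 1 + 1 = i := by omega
      simp only [he] at this
      exact this



lemma lemA : ∀ (s : ℕ) (u : List ℝ), u.length = s → u.Pairwise (· > ·) →
    ∀ F : Polynomial ℝ, 0 < F.leadingCoeff →
    (F.natDegree = s ∨ F.natDegree + 1 = s) →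
    (∀ (j : ℕ) (h : j < u.length), 0 ≤ (-1 : ℝ) ^ j * F.eval u[j]) →
    F.roots.card = F.natDegree ∧
      ∃ w : List ℝ, w.Pairwise (· ≥ ·) ∧ F.roots = ↑w ∧ w.length = F.natDegree ∧ Sq u w := by
  intro s
  induction s using Nat.strong_induction_on with
  | _ s IH =>
  intro u hulen hu F hlc hdeg hsign
  have hF0 : F ≠ 0 := by
    intro h
    rw [h, leadingCoeff_zero] at hlc
    exact lt_irrefl 0 hlc
  have huge : u.Pairwise (· ≥ ·) := hu.imp (fun h => le_of_lt h)
  rcases Nat.eq_zero_or_pos s with hs0 | hspos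
  · subst hs0
    have hd : F.natDegree = 0 := by omega
    obtain ⟨a, ha⟩ := natDegree_eq_zero.1 hd
    have hroots : F.roots = 0 := by rw [← ha, roots_C]
    exact ⟨by rw [hroots, hd]; simp, [], by simp, by rw [hroots]; simp, by simp [hd],
      by constructor <;> (intro i h1 h2; simp at h1 h2)⟩
  by_cases hex : ∃ (j : ℕ) (h : j < u.length), F.eval u[j] = 0
  · -- deflation case
    obtain ⟨j, hj, hroot⟩ := hex
    obtain ⟨K, hK⟩ : (X - C u[j]) ∣ F := dvd_iff_isRoot.2 hroot
    have hKne : K ≠ 0 := by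
      intro h; rw [h, mul_zero] at hK; exact hF0 hK
    have hdK : F.natDegree = K.natDegree + 1 := by
      rw [hK, natDegree_mul (X_sub_C_ne_zero _) hKne, natDegree_X_sub_C]; omega
    have hlcK : K.leadingCoeff = F.leadingCoeff := by
      rw [hK, leadingCoeff_mul, leadingCoeff_X_sub_C, one_mul]
    have hjs : j < s := by omega
    set u' := u.eraseIdx j with hu'def
    have hlu' : u'.length = s - 1 := by
      rw [hu'def, List.length_eraseIdx_of_lt hj, hulen]
    have hu'sort : u'.Pairwise (· > ·) := hu.sublist (List.eraseIdx_sublist u j)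
    have hsignK : ∀ (l : ℕ) (h : l < u'.length), 0 ≤ (-1 : ℝ) ^ l * K.eval u'[l] := by
      intro l hl
      rcases lt_or_ge l j with hlj | hlj
      · rw [List.getElem_eraseIdx_of_lt (l := u) (i := j) (j := l) hl hlj]
        have hjl : u[j] < u[l]'(by omega) := sorted_getElem_lt hu hlj hj
        have hs := hsign l (by omega)
        rw [hK, eval_mul, eval_sub, eval_X, eval_C] at hs
        nlinarith [hs, hjl]
      · rw [List.getElem_eraseIdx_of_ge (l := u) (i := j) (j := l) hl hlj]
        have hl1 : l + 1 < u.length := by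
          rw [hlu'] at hl; omega
        have hlt : u[l + 1] < u[j] := sorted_getElem_lt hu (by omega) hl1
        have hs := hsign (l + 1) hl1
        rw [hK, eval_mul, eval_sub, eval_X, eval_C, pow_succ] at hs
        nlinarith [hs, hlt]
    have hdegF1 : 1 ≤ F.natDegree := by
      by_contra h
      have hd0 : F.natDegree = 0 := by omega
      obtain ⟨a, ha⟩ := natDegree_eq_zero.1 hd0
      have : a ≠ 0 := by
        intro h0; rw [h0, map_zero] at ha; exact hF0 ha.symm
      rw [← ha, eval_C] at hroot
      exact this hroot
    have hdegK : K.natDegree = s - 1 ∨ K.natDegree + 1 = s - 1 := by omega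
    obtain ⟨hcardK, w', hw'sort, hw'roots, hw'len, hw'sq⟩ :=
      IH (s - 1) (by omega) u' hlu' hu'sort K (hlcK ▸ hlc) hdegK hsignK
    have hlw' : w'.length ≤ s - 1 := by omega
    have hlw2 : s - 2 ≤ w'.length := by omega
    have ha : ∀ (i : ℕ) (h : i < w'.length), j ≤ i → w'[i] ≤ u[j] := by
      intro i h hji
      have h1 : i < u'.length := by omega
      have h2 := hw'sq.1 i h h1
      have h3 : u'[i]'h1 = u[i + 1]'(by rw [hlu'] at h1; omega) :=
        List.getElem_eraseIdx_of_ge (l := u) (i := j) (j := i) h1 hji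
      rw [h3] at h2
      exact h2.trans (sorted_getElem_le huge (by omega) (by rw [hlu'] at h1; omega))
    have hb : ∀ (i : ℕ) (h : i < w'.length), i + 1 < j → u[j] < w'[i] := by
      intro i h hij
      have h1 : i + 1 < u'.length := by omega
      have h2 := hw'sq.2 i h1 h
      have h3 : u'[i + 1]'h1 = u[i + 1]'(by omega) :=
        List.getElem_eraseIdx_of_lt (l := u) (i := j) (j := (i + 1)) h1 hij
      rw [h3] at h2
      exact lt_of_lt_of_le (sorted_getElem_lt hu hij hj) h2
    have hp : ∃ p, p ≤ w'.length ∧ p ≤ j ∧ j ≤ p + 1 ∧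
        (∀ (i : ℕ) (h : i < w'.length), i < p → u[j] ≤ w'[i]) ∧
        (∀ (i : ℕ) (h : i < w'.length), p ≤ i → w'[i] ≤ u[j]) := by
      rcases Nat.eq_zero_or_pos j with hj0 | hjpos
      · exact ⟨0, Nat.zero_le _, by omega, by omega, fun i h hip => by omega,
          fun i h _ => ha i h (by omega)⟩
      rcases le_or_gt j w'.length with hjlen | hjlen
      · have hj1 : j - 1 < w'.length := by omega
        by_cases hval : u[j] < w'[j - 1]
        · refine ⟨j, hjlen, le_rfl, by omega, ?_, fun i h hji => ha i h hji⟩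
          intro i h hip
          rcases lt_or_ge (i + 1) j with hc | hc
          · exact (hb i h hc).le
          · have he : i = j - 1 := by omega
            subst he; exact hval.le
        · refine ⟨j - 1, by omega, by omega, by omega, ?_, ?_⟩
          · intro i h hip
            exact (hb i h (by omega)).le
          · intro i h hip
            rcases lt_or_ge i j with hc | hc
            · have he : i = j - 1 := by omega
              subst he; exact le_of_not_gt hval
            · exact ha i h hc
      · refine ⟨j - 1, by omega, by omega, by omega, ?_, ?_⟩
        · intro i h hip
          exact (hb i h (by omega)).le
        · intro i h hip
          omega
    obtain ⟨p, hp1, hp2, hp3, hge, hle⟩ := hp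
    set w := w'.insertIdx p u[j] with hwdef
    have hwlen : w.length = w'.length + 1 := length_insertIdx' w' _ p hp1
    have hwsort : w.Pairwise (· ≥ ·) := sorted_insertIdx w' _ p hp1 hw'sort hge hle
    have hwroots : F.roots = ↑w := by
      rw [hwdef, coe_insertIdx w' p hp1 u[j], hK,
        roots_mul (mul_ne_zero (X_sub_C_ne_zero _) hKne), roots_X_sub_C,
        Multiset.singleton_add, hw'roots]
    have hwsq : Sq u w := sq_insertIdx u w' j p huge hj hp1 hp2 hp3 hge hle hw'sq
    refine ⟨?_, w, hwsort, hwroots, by omega, hwsq⟩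
    rw [hwroots]
    simp only [Multiset.coe_card]
    omega
  · -- strict signs case
    push_neg at hex
    have hstrict : ∀ (j : ℕ) (h : j < u.length), 0 < (-1 : ℝ) ^ j * F.eval u[j] := by
      intro j h
      rcases (hsign j h).lt_or_eq with h' | h'
      · exact h'
      · exfalso
        apply hex j h
        rcases mul_eq_zero.1 h'.symm with h1 | h1
        · exact absurd h1 (pow_ne_zero _ (by norm_num))
        · exact h1
    have hsq1 : ∀ j : ℕ, ((-1:ℝ)^j) * ((-1:ℝ)^j) = 1 := by
      intro j; rw [← pow_add, ← two_mul, pow_mul]; norm_num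
    have hmid : ∀ (j : ℕ) (h : j + 1 < u.length), ∃ x, u[j + 1] < x ∧ x < u[j] ∧ F.IsRoot x := by
      intro j h
      have h1 := hstrict j (by omega)
      have h2 := hstrict (j + 1) h
      rw [pow_succ] at h2
      have hlt : u[j + 1] < u[j] := sorted_getElem_lt hu (by omega) h
      have hprod : F.eval u[j + 1] * F.eval u[j] < 0 := by nlinarith [hsq1 j]
      rcases lt_or_ge (F.eval u[j + 1]) 0 with hc | hc
      · have hc2 : 0 < F.eval u[j] := by nlinarith
        obtain ⟨x, hx, hfx⟩ := intermediate_value_Ioo hlt.le F.continuous.continuousOn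
          (Set.mem_Ioo.2 ⟨hc, hc2⟩)
        exact ⟨x, hx.1, hx.2, hfx⟩
      · have hc1 : 0 < F.eval u[j + 1] := by
          rcases hc.lt_or_eq with h' | h'
          · exact h'
          · exact absurd h'.symm (hex (j + 1) h)
        have hc2 : F.eval u[j] < 0 := by nlinarith
        obtain ⟨x, hx, hfx⟩ := intermediate_value_Ioo' hlt.le F.continuous.continuousOn
          (Set.mem_Ioo.2 ⟨hc2, hc1⟩)
        exact ⟨x, hx.1, hx.2, hfx⟩
    have hds : F.natDegree ≤ s := by omega
    have hr : ∃ r : Fin F.natDegree → ℝ, StrictAnti r ∧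
        (∀ (i : Fin F.natDegree) (h : (i : ℕ) < u.length), r i < u[(i : ℕ)]) ∧
        (∀ (i : Fin F.natDegree) (h : (i : ℕ) + 1 < u.length), u[(i : ℕ) + 1] < r i) ∧
        (∀ i, F.IsRoot (r i)) := by
      rcases hdeg with hd | hd
      · -- extra low root needed
        have hs1 : s - 1 < u.length := by omega
        have hlow : ∃ x, x < u[s - 1] ∧ F.IsRoot x := by
          set G := C ((-1 : ℝ) ^ F.natDegree) * F.comp (-X) with hGdef
          have hne : ((-1:ℝ) ^ F.natDegree) ≠ 0 := pow_ne_zero _ (by norm_num)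
          have hGd : G.natDegree = F.natDegree := by
            rw [hGdef, natDegree_C_mul hne, natDegree_comp]
            simp
          have hGlc : G.leadingCoeff = F.leadingCoeff := by
            rw [hGdef, leadingCoeff_mul, leadingCoeff_C,
              leadingCoeff_comp (by simp : (-X : Polynomial ℝ).natDegree ≠ 0)]
            simp only [leadingCoeff_neg, leadingCoeff_X]
            linear_combination F.leadingCoeff * hsq1 F.natDegree
          have hGdeg : 0 < G.degree := natDegree_pos_iff_degree_pos.1 (by omega)
          have htend := tendsto_atTop_of_leadingCoeff_nonneg G hGdeg (by rw [hGlc]; exact hlc.le)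
          obtain ⟨y, hy1, hy2⟩ := ((htend.eventually_gt_atTop 0).and
            (Filter.eventually_gt_atTop (-u[s - 1]))).exists
          have hyval : G.eval y = (-1 : ℝ) ^ F.natDegree * F.eval (-y) := by
            rw [hGdef, eval_mul, eval_C, eval_comp]
            simp
          rw [hyval] at hy1
          have hylt : -y < u[s - 1] := by linarith
          have h2 := hstrict (s - 1) hs1
          have hd1 : F.natDegree = (s - 1) + 1 := by omega
          rw [hd1, pow_succ] at hy1
          have hprod : F.eval (-y) * F.eval u[s - 1] < 0 := by nlinarith [hsq1 (s - 1)]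
          rcases lt_trichotomy (F.eval (-y)) 0 with hc | hc | hc
          · have hc2 : 0 < F.eval u[s - 1] := by nlinarith
            obtain ⟨x, hx, hfx⟩ := intermediate_value_Ioo hylt.le F.continuous.continuousOn
              (Set.mem_Ioo.2 ⟨hc, hc2⟩)
            exact ⟨x, hx.2, hfx⟩
          · exact ⟨-y, hylt, hc⟩
          · have hc2 : F.eval u[s - 1] < 0 := by nlinarith
            obtain ⟨x, hx, hfx⟩ := intermediate_value_Ioo' hylt.le F.continuous.continuousOn
              (Set.mem_Ioo.2 ⟨hc2, hc⟩)
            exact ⟨x, hx.2, hfx⟩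
        refine ⟨fun i => if h : (i : ℕ) + 1 < u.length then (hmid i h).choose
          else hlow.choose, ?_, ?_, ?_, ?_⟩
        · intro i j hij
          dsimp only
          have hjlt : (j : ℕ) < u.length := by omega
          have hi1 : (i : ℕ) + 1 < u.length := by omega
          have hlow1 : ∀ k : Fin F.natDegree, ∀ (hk : (k : ℕ) < u.length),
              (if h : (k : ℕ) + 1 < u.length then (hmid k h).choose else hlow.choose) < u[(k : ℕ)] := by
            intro k hk
            by_cases h : (k : ℕ) + 1 < u.length
            · rw [dif_pos h]
              exact (hmid k h).choose_spec.2.1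
            · rw [dif_neg h]
              have he : (k : ℕ) = s - 1 := by omega
              have := hlow.choose_spec.1
              simp only [he]
              exact this
          have h1 : (if h : (j : ℕ) + 1 < u.length then (hmid j h).choose else hlow.choose)
              < u[(j : ℕ)] := hlow1 j hjlt
          have h2 : u[(i : ℕ) + 1] < (if h : (i : ℕ) + 1 < u.length then (hmid i h).choose
              else hlow.choose) := by
            rw [dif_pos hi1]
            exact (hmid i hi1).choose_spec.1
          have h3 : u[(j : ℕ)] ≤ u[(i : ℕ) + 1] := sorted_getElem_le huge (by omega) hjlt
          calc (if h : (j : ℕ) + 1 < u.length then (hmid j h).choose else hlow.choose)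
              < u[(j : ℕ)] := h1
          _ ≤ u[(i : ℕ) + 1] := h3
          _ < _ := h2
        · intro i hk
          dsimp only
          by_cases h : (i : ℕ) + 1 < u.length
          · rw [dif_pos h]
            exact (hmid i h).choose_spec.2.1
          · rw [dif_neg h]
            have he : (i : ℕ) = s - 1 := by omega
            have := hlow.choose_spec.1
            simp only [he]
            exact this
        · intro i h
          dsimp only
          rw [dif_pos h]
          exact (hmid i h).choose_spec.1
        · intro i
          dsimp only
          by_cases h : (i : ℕ) + 1 < u.length
          · rw [dif_pos h]
            exact (hmid i h).choose_spec.2.2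
          · rw [dif_neg h]
            exact hlow.choose_spec.2
      · -- no low root needed
        refine ⟨fun i => (hmid i (by omega)).choose, ?_, ?_, ?_, ?_⟩
        · intro i j hij
          have h1 := (hmid (j : ℕ) (by omega : (j : ℕ) + 1 < u.length)).choose_spec.2.1
          have h2 := (hmid (i : ℕ) (by omega : (i : ℕ) + 1 < u.length)).choose_spec.1
          have h3 : u[(j : ℕ)]'(by omega) ≤ u[(i : ℕ) + 1]'(by omega) :=
            sorted_getElem_le huge (by omega) (by omega)
          calc (hmid (j : ℕ) (by omega)).choose < u[(j : ℕ)]'(by omega) := h1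
          _ ≤ u[(i : ℕ) + 1]'(by omega) := h3
          _ < _ := h2
        · intro i h
          exact (hmid i (by omega)).choose_spec.2.1
        · intro i h
          exact (hmid i (by omega)).choose_spec.1
        · intro i
          exact (hmid i (by omega)).choose_spec.2.2
    obtain ⟨r, hrs, hru, hrl, hrr⟩ := hr
    set w := List.ofFn r with hwdef
    have hwlen : w.length = F.natDegree := by rw [hwdef, List.length_ofFn]
    have hwsort : w.Pairwise (· ≥ ·) := List.pairwise_ofFn.2 (fun i j hij => (hrs hij).le)
    have hnodup : w.Nodup := List.nodup_ofFn.2 hrs.injective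
    have hwle : (↑w : Multiset ℝ) ≤ F.roots := by
      rw [Multiset.le_iff_count]
      intro a
      rw [Multiset.coe_count]
      by_cases ha : a ∈ w
      · rw [List.count_eq_one_of_mem hnodup ha]
        refine Multiset.one_le_count_iff_mem.2 (mem_roots'.2 ⟨hF0, ?_⟩)
        rw [hwdef] at ha
        obtain ⟨i, rfl⟩ := List.mem_ofFn.1 ha
        exact hrr i
      · rw [List.count_eq_zero_of_not_mem ha]
        exact Nat.zero_le _
    have hroots : F.roots = ↑w := by
      refine (Multiset.eq_of_le_of_card_le hwle ?_).symm
      rw [Multiset.coe_card, hwlen]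
      exact F.card_roots'
    refine ⟨by rw [hroots, Multiset.coe_card, hwlen], w, hwsort, hroots, hwlen, ?_, ?_⟩
    · intro i h1 h2
      have hiF : i < F.natDegree := by omega
      have he : w[i] = r ⟨i, hiF⟩ := List.getElem_ofFn h1
      rw [he]
      exact (hru ⟨i, hiF⟩ h2).le
    · intro i h1 h2
      have hiF : i < F.natDegree := by omega
      have he : w[i]'h2 = r ⟨i, hiF⟩ := List.getElem_ofFn h2
      rw [he]
      exact (hrl ⟨i, hiF⟩ h1).le

lemma term_factor (c : ℝ) (v : List ℝ) (k : ℕ) (hk : k < v.length) :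
    term c v = (X - C v[k]) * term c (v.eraseIdx k) := by
  rw [term, term, coe_list_eraseIdx v k hk, Multiset.map_cons, Multiset.prod_cons]
  ring

lemma list_sum_mul_left (a : Polynomial ℝ) : ∀ l : List (Polynomial ℝ),
    a * l.sum = (l.map (fun q => a * q)).sum
  | [] => by simp
  | q :: l => by simp [mul_add, list_sum_mul_left a l]

lemma list_sum_mul_left' (a : ℝ) : ∀ l : List ℝ,
    a * l.sum = (l.map (fun q => a * q)).sum
  | [] => by simp
  | q :: l => by simp [mul_add, list_sum_mul_left' a l]

lemma master : ∀ (m : ℕ) (u : List ℝ), u.length = m → u.Pairwise (· ≥ ·) →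
    ∀ P : List (ℝ × List ℝ), P ≠ [] →
    (∀ p ∈ P, 0 < p.1 ∧ p.2.Pairwise (· ≥ ·) ∧ (p.2.length = m ∨ p.2.length + 1 = m) ∧ Sq u p.2) →
    0 < ((P.map fun p => term p.1 p.2).sum).leadingCoeff ∧
    (((P.map fun p => term p.1 p.2).sum).natDegree = m ∨
      ((P.map fun p => term p.1 p.2).sum).natDegree + 1 = m) ∧
    ((P.map fun p => term p.1 p.2).sum).roots.card = ((P.map fun p => term p.1 p.2).sum).natDegree ∧
    ∃ w : List ℝ, w.Pairwise (· ≥ ·) ∧ ((P.map fun p => term p.1 p.2).sum).roots = ↑w ∧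
      w.length = ((P.map fun p => term p.1 p.2).sum).natDegree ∧ Sq u w := by
  intro m
  induction m using Nat.strong_induction_on with
  | _ m IH =>
  intro u hulen hu P hPne hP
  have hFdeg : 0 < ((P.map fun p => term p.1 p.2).sum).leadingCoeff ∧
      (((P.map fun p => term p.1 p.2).sum).natDegree = m ∨
        ((P.map fun p => term p.1 p.2).sum).natDegree + 1 = m) := by
    apply sum_deg m (P.map fun p => term p.1 p.2) (by simpa using hPne)
    intro q hq
    obtain ⟨p, hp, rfl⟩ := List.mem_map.1 hq
    have h := hP p hp
    refine ⟨by rw [leadingCoeff_term]; exact h.1, ?_⟩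
    rw [natDegree_term p.1 h.1.ne' p.2]
    exact h.2.2.1
  by_cases hdup : ∃ (k : ℕ) (h : k + 1 < u.length), u[k] = u[k + 1]
  · -- deflation of a repeated entry of u
    obtain ⟨k, hk1, hkeq⟩ := hdup
    have hkm : k + 1 < m := by omega
    have hfact : ∀ p ∈ P, term p.1 p.2 = (X - C u[k + 1]) * term p.1 (p.2.eraseIdx k) := by
      intro p hp
      have h := hP p hp
      have hkv : k < p.2.length := by rcases h.2.2.1 with h' | h' <;> omega
      have hvk : p.2[k] = u[k + 1] := by
        refine le_antisymm ?_ (h.2.2.2.2 k hk1 hkv)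
        have := h.2.2.2.1 k hkv (by omega)
        rwa [hkeq] at this
      rw [term_factor p.1 p.2 k hkv, hvk]
    have hsum : (P.map fun p => term p.1 p.2).sum
        = (X - C u[k + 1]) * (((P.map fun p => (p.1, p.2.eraseIdx k))).map fun p => term p.1 p.2).sum := by
      have h1 : P.map (fun p => term p.1 p.2)
          = (P.map fun p => term p.1 (p.2.eraseIdx k)).map (fun q => (X - C u[k + 1]) * q) := by
        rw [List.map_map]
        exact List.map_congr_left hfact
      rw [h1, ← list_sum_mul_left]
      congr 1
      rw [List.map_map]
      rfl
    have hu'len : (u.eraseIdx (k + 1)).length = m - 1 := by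
      rw [List.length_eraseIdx_of_lt hk1, hulen]
    have hu'sort : (u.eraseIdx (k + 1)).Pairwise (· ≥ ·) :=
      hu.sublist (List.eraseIdx_sublist u (k + 1))
    set P' := P.map (fun p => (p.1, p.2.eraseIdx k)) with hP'def
    have hP' : ∀ p ∈ P', 0 < p.1 ∧ p.2.Pairwise (· ≥ ·) ∧
        (p.2.length = m - 1 ∨ p.2.length + 1 = m - 1) ∧ Sq (u.eraseIdx (k + 1)) p.2 := by
      intro p' hp'
      obtain ⟨p, hp, rfl⟩ := List.mem_map.1 hp'
      dsimp only
      have h := hP p hp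
      have hkv : k < p.2.length := by rcases h.2.2.1 with h' | h' <;> omega
      have hlen' : (p.2.eraseIdx k).length = p.2.length - 1 := List.length_eraseIdx_of_lt hkv
      refine ⟨h.1, h.2.1.sublist (List.eraseIdx_sublist _ k), by rcases h.2.2.1 with h' | h' <;> omega, ?_, ?_⟩
      · -- upper
        intro i h1 h2
        rw [hlen'] at h1
        rw [hu'len] at h2
        rcases lt_or_ge i k with hik | hik
        · rw [List.getElem_eraseIdx_of_lt (l := p.2) (i := k) (j := i) (by omega) hik,
            List.getElem_eraseIdx_of_lt (l := u) (i := (k + 1)) (j := i) (by omega) (by omega)]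
          exact h.2.2.2.1 i (by omega) (by omega)
        · rw [List.getElem_eraseIdx_of_ge (l := p.2) (i := k) (j := i) (by omega) hik]
          rcases lt_or_ge i (k + 1) with hik2 | hik2
          · rw [List.getElem_eraseIdx_of_lt (l := u) (i := (k + 1)) (j := i) (by omega) hik2]
            have he : i = k := by omega
            subst he
            have := h.2.2.2.1 (i + 1) (by omega) (by omega)
            rwa [hkeq]
          · rw [List.getElem_eraseIdx_of_ge (l := u) (i := (k + 1)) (j := i) (by omega) hik2]
            exact h.2.2.2.1 (i + 1) (by omega) (by omega)
      · -- lower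
        intro i h1 h2
        rw [hu'len] at h1
        rw [hlen'] at h2
        rcases lt_or_ge i k with hik | hik
        · rw [List.getElem_eraseIdx_of_lt (l := p.2) (i := k) (j := i) (by omega) hik,
            List.getElem_eraseIdx_of_lt (l := u) (i := (k + 1)) (j := (i + 1)) (by omega) (by omega)]
          exact h.2.2.2.2 i (by omega) (by omega)
        · rw [List.getElem_eraseIdx_of_ge (l := p.2) (i := k) (j := i) (by omega) hik,
            List.getElem_eraseIdx_of_ge (l := u) (i := (k + 1)) (j := (i + 1)) (by omega) (by omega)]
          exact h.2.2.2.2 (i + 1) (by omega) (by omega)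
    have hP'ne : P' ≠ [] := by
      rw [hP'def]
      intro h
      exact hPne (List.map_eq_nil_iff.1 h)
    obtain ⟨hlc', hdeg', hcard', w', hw'sort, hw'roots, hw'len, hw'sq⟩ :=
      IH (m - 1) (by omega) (u.eraseIdx (k + 1)) hu'len hu'sort P' hP'ne hP'
    have hF'ne : ((P'.map fun p => term p.1 p.2).sum) ≠ 0 := by
      intro h
      rw [h, leadingCoeff_zero] at hlc'
      exact lt_irrefl 0 hlc'
    have hdF : ((P.map fun p => term p.1 p.2).sum).natDegree
        = ((P'.map fun p => term p.1 p.2).sum).natDegree + 1 := by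
      rw [hP'def] at *
      rw [hsum, natDegree_mul (X_sub_C_ne_zero _) hF'ne, natDegree_X_sub_C]
      omega
    have hroots : ((P.map fun p => term p.1 p.2).sum).roots
        = u[k + 1] ::ₘ ((P'.map fun p => term p.1 p.2).sum).roots := by
      rw [hP'def] at *
      rw [hsum, roots_mul (mul_ne_zero (X_sub_C_ne_zero _) hF'ne), roots_X_sub_C,
        Multiset.singleton_add]
    -- insertion of the root u[k+1] at position k
    have hlww : w'.length ≤ m - 1 := by
      rcases hdeg' with h' | h' <;> omega
    have hlw' : k ≤ w'.length := by
      rcases hdeg' with h' | h' <;> omega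
    have hge : ∀ (i : ℕ) (h : i < w'.length), i < k → u[k + 1] ≤ w'[i] := by
      intro i h hik
      have h1 : i + 1 < (u.eraseIdx (k + 1)).length := by omega
      have h2 := hw'sq.2 i h1 h
      have h3 : (u.eraseIdx (k + 1))[i + 1]'h1 = u[i + 1]'(by omega) :=
        List.getElem_eraseIdx_of_lt (l := u) (i := (k + 1)) (j := (i + 1)) h1 (by omega)
      rw [h3] at h2
      exact le_trans (sorted_getElem_le hu (by omega) hk1) h2
    have hle : ∀ (i : ℕ) (h : i < w'.length), k ≤ i → w'[i] ≤ u[k + 1] := by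
      intro i h hik
      have h1 : i < (u.eraseIdx (k + 1)).length := by omega
      have h2 := hw'sq.1 i h h1
      rcases lt_or_ge i (k + 1) with hik2 | hik2
      · have he : i = k := by omega
        have h3 : (u.eraseIdx (k + 1))[i]'h1 = u[i]'(by omega) :=
          List.getElem_eraseIdx_of_lt (l := u) (i := (k + 1)) (j := i) h1 (by omega)
        rw [h3] at h2
        refine le_trans h2 ?_
        have : u[i]'(by omega) = u[k] := by simp only [he]
        rw [this, hkeq]
      · have h3 : (u.eraseIdx (k + 1))[i]'h1 = u[i + 1]'(by rw [hu'len] at h1; omega) :=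
          List.getElem_eraseIdx_of_ge (l := u) (i := (k + 1)) (j := i) h1 hik2
        rw [h3] at h2
        exact h2.trans (sorted_getElem_le hu (by omega) (by rw [hu'len] at h1; omega))
    have hwsort : (w'.insertIdx k u[k + 1]).Pairwise (· ≥ ·) :=
      sorted_insertIdx w' _ k hlw' hw'sort hge hle
    have hwsq : Sq u (w'.insertIdx k u[k + 1]) :=
      sq_insertIdx u w' (k + 1) k hu hk1 hlw' (by omega) (by omega) hge hle hw'sq
    have hwroots : ((P.map fun p => term p.1 p.2).sum).roots = ↑(w'.insertIdx k u[k + 1]) := by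
      rw [hroots, coe_insertIdx w' k hlw' _, hw'roots]
    have hwlen : (w'.insertIdx k u[k + 1]).length
        = ((P.map fun p => term p.1 p.2).sum).natDegree := by
      rw [length_insertIdx' w' _ k hlw', hw'len, hdF]
    refine ⟨hFdeg.1, hFdeg.2, ?_, _, hwsort, hwroots, hwlen, hwsq⟩
    rw [hwroots, Multiset.coe_card, hwlen]
  · -- u strictly decreasing : use lemA
    have hustrict : u.Pairwise (· > ·) := by
      rw [List.pairwise_iff_getElem]
      intro i j hi hj hij
      have h1 : u[i + 1]'(by omega) ≤ u[i] := sorted_getElem_le hu (by omega) (by omega)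
      have h2 : u[i] ≠ u[i + 1]'(by omega) := fun he => hdup ⟨i, by omega, he⟩
      have h3 : u[j] ≤ u[i + 1]'(by omega) := sorted_getElem_le hu (by omega) hj
      exact lt_of_le_of_lt h3 (lt_of_le_of_ne h1 (fun he => h2 he.symm))
    have hsign : ∀ (j : ℕ) (h : j < u.length),
        0 ≤ (-1 : ℝ) ^ j * ((P.map fun p => term p.1 p.2).sum).eval u[j] := by
      intro j hjl
      have heval : ((P.map fun p => term p.1 p.2).sum).eval u[j]
          = (P.map fun p => (term p.1 p.2).eval u[j]).sum := by
        have := map_list_sum (evalRingHom u[j]) (P.map fun p => term p.1 p.2)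
        simp only [List.map_map] at this
        simpa [Function.comp_def] using this
      rw [heval, list_sum_mul_left', List.map_map]
      apply List.sum_nonneg
      intro x hx
      obtain ⟨p, hp, rfl⟩ := List.mem_map.1 hx
      have h := hP p hp
      simp only [Function.comp_apply]
      rw [eval_term]
      have hjv : j ≤ p.2.length := by rcases h.2.2.1 with h' | h' <;> omega
      have hker := kernel u[j] j p.2 hjv
        (fun i hi hij => by
          have h2 := h.2.2.2.2 i (by omega) hi
          exact le_trans (sorted_getElem_le hu (by omega) (by omega)) h2)
        (fun i hi hij => by
          have h2 := h.2.2.2.1 i hi (by rcases h.2.2.1 with h' | h' <;> omega)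
          exact h2.trans (sorted_getElem_le hu hij (by rcases h.2.2.1 with h' | h' <;> omega)))
      calc (0 : ℝ) ≤ p.1 * ((-1 : ℝ) ^ j * (p.2.map (fun a => u[j] - a)).prod) :=
        mul_nonneg h.1.le hker
      _ = (-1 : ℝ) ^ j * (p.1 * (p.2.map (fun a => u[j] - a)).prod) := by ring
    obtain ⟨hcard, w, hwsort, hwroots, hwlen, hwsq⟩ :=
      lemA m u hulen hustrict _ hFdeg.1 hFdeg.2 hsign
    exact ⟨hFdeg.1, hFdeg.2, hcard, w, hwsort, hwroots, hwlen, hwsq⟩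

lemma le_foldr_max : ∀ (l : List ℝ) (b x : ℝ), x ∈ l → x ≤ l.foldr max b
  | [], _, x, hx => by simp at hx
  | a :: l, b, x, hx => by
    rcases List.mem_cons.1 hx with rfl | hx'
    · simp only [List.foldr_cons]
      exact le_max_left _ _
    · simp only [List.foldr_cons]
      exact le_max_of_le_right (le_foldr_max l b x hx')

lemma sorted_coe_unique (l1 l2 : List ℝ) (h1 : l1.Pairwise (· ≥ ·)) (h2 : l2.Pairwise (· ≥ ·))
    (h : (↑l1 : Multiset ℝ) = ↑l2) : l1 = l2 := by
  haveI : IsAntisymm ℝ (· ≥ ·) := ⟨fun a b x y => le_antisymm y x⟩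
  exact List.Perm.eq_of_pairwise (fun a b _ _ x y => le_antisymm y x) h1 h2 (Multiset.coe_eq_coe.1 h)

end SumAux

open SumAux in
/-- Sums of polynomials all interlacing (resp. interlaced by) a common
polynomial `g` are real-rooted and interlace (resp. are interlaced by) `g`. -/
theorem sum_interlaces (n : ℕ) (hn : 1 ≤ n) (g : Polynomial ℝ)
    (f : Fin n → Polynomial ℝ)
    (hg : AllRealRoots g ∧ 0 < g.leadingCoeff)
    (hf : ∀ i, AllRealRoots (f i) ∧ 0 < (f i).leadingCoeff) :
    ((∀ i, Interlaces (f i) g) →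
      AllRealRoots (∑ i, f i) ∧ Interlaces (∑ i, f i) g) ∧
    ((∀ i, Interlaces g (f i)) →
      AllRealRoots (∑ i, f i) ∧ Interlaces g (∑ i, f i)) := by
  constructor
  · -- direction 1 : every f i ⪯ g
    intro hI
    obtain ⟨hg2, hfi0, u, v0, hus, hv0s, hgu, hfv0, hul, hv0l, hlen0, h0a, h0b⟩ := hI ⟨0, hn⟩
    have hv : ∀ i : Fin n, ∃ vi : List ℝ, vi.Pairwise (· ≥ ·) ∧ (f i).roots = ↑vi ∧
        vi.length = (f i).natDegree ∧ (vi.length = u.length ∨ vi.length + 1 = u.length) ∧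
        Sq u vi := by
      intro i
      obtain ⟨_, _, ui, vi, huis, hvis, hgui, hfvi, huil, hvil, hleni, hA, hB⟩ := hI i
      have huu : ui = u := sorted_coe_unique ui u huis hus (hgui.symm.trans hgu)
      subst huu
      refine ⟨vi, hvis, hfvi, hvil, by omega, ?_, ?_⟩
      · intro k h1 h2
        have := hA k h1 h2
        simpa [List.get_eq_getElem] using this
      · intro k h1 h2
        have := hB k h1 h2
        simpa [List.get_eq_getElem] using this
    choose v hv1 hv2 hv3 hv4 hv5 using hv
    have hterm : ∀ i : Fin n, term (f i).leadingCoeff (v i) = f i := by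
      intro i
      rw [term, ← hv2 i]
      exact C_leadingCoeff_mul_prod_multiset_X_sub_C (hf i).1
    have hFP : ((List.ofFn (fun i => ((f i).leadingCoeff, v i))).map fun p => term p.1 p.2).sum
        = ∑ i, f i := by
      rw [List.map_ofFn]
      have he : ((fun p : ℝ × List ℝ => term p.1 p.2) ∘ fun i => ((f i).leadingCoeff, v i))
          = fun i => term (f i).leadingCoeff (v i) := rfl
      rw [he, funext hterm]
      exact List.sum_ofFn
    have hPne : List.ofFn (fun i => ((f i).leadingCoeff, v i)) ≠ [] := by
      simp only [ne_eq, List.ofFn_eq_nil_iff]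
      omega
    have hPall : ∀ p ∈ List.ofFn (fun i => ((f i).leadingCoeff, v i)),
        0 < p.1 ∧ p.2.Pairwise (· ≥ ·) ∧ (p.2.length = u.length ∨ p.2.length + 1 = u.length) ∧
        Sq u p.2 := by
      intro p hp
      obtain ⟨i, rfl⟩ := List.mem_ofFn.1 hp
      exact ⟨(hf i).2, hv1 i, hv4 i, hv5 i⟩
    obtain ⟨hlcF, hdegF, hcardF, w, hwsort, hwroots, hwlen, hwsq⟩ :=
      master u.length u rfl hus _ hPne hPall
    rw [hFP] at hlcF hdegF hcardF hwroots hwlen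
    refine ⟨hcardF, hg.2, hlcF, u, w, hus, hwsort, hgu, hwroots, hul, hwlen, ?_, ?_, ?_⟩
    · rcases hdegF with h | h
      · left; omega
      · right; omega
    · intro k h1 h2
      simp only [List.get_eq_getElem]
      exact hwsq.1 k h1 h2
    · intro k h1 h2
      simp only [List.get_eq_getElem]
      exact hwsq.2 k h1 h2
  · -- direction 2 : g ⪯ every f i
    intro hI
    obtain ⟨hfi0, hg2, u0, vg, hu0s, hvgs, hfu0, hgvg, hu0l, hvgl, hlen0, h0a, h0b⟩ := hI ⟨0, hn⟩
    have hv : ∀ i : Fin n, ∃ ui : List ℝ, ui.Pairwise (· ≥ ·) ∧ (f i).roots = ↑ui ∧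
        ui.length = (f i).natDegree ∧ (ui.length = vg.length ∨ ui.length = vg.length + 1) ∧
        (∀ (k : ℕ) (h1 : k < vg.length) (h2 : k < ui.length), vg[k] ≤ ui[k]) ∧
        (∀ (k : ℕ) (h1 : k + 1 < ui.length) (h2 : k < vg.length), ui[k + 1] ≤ vg[k]) := by
      intro i
      obtain ⟨_, _, ui, vi, huis, hvis, hfui, hgvi, huil, hvil, hleni, hA, hB⟩ := hI i
      have hvv : vi = vg := sorted_coe_unique vi vg hvis hvgs (hgvi.symm.trans hgvg)
      subst hvv
      refine ⟨ui, huis, hfui, huil, by omega, ?_, ?_⟩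
      · intro k h1 h2
        have := hA k h1 h2
        simpa [List.get_eq_getElem] using this
      · intro k h1 h2
        have := hB k h1 h2
        simpa [List.get_eq_getElem] using this
    choose uu hu1 hu2 hu3 hu4 hu5 hu6 using hv
    set M : ℝ := (vg ++ (List.ofFn uu).flatten).foldr max 0 with hMdef
    have hMvg : ∀ x ∈ vg, x ≤ M := fun x hx =>
      le_foldr_max _ 0 x (List.mem_append_left _ hx)
    have hMu : ∀ (i : Fin n) (x : ℝ), x ∈ uu i → x ≤ M := fun i x hx =>
      le_foldr_max _ 0 x (List.mem_append_right _
        (List.mem_flatten.2 ⟨uu i, List.mem_ofFn.2 ⟨i, rfl⟩, hx⟩))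
    have hUs : (M :: vg).Pairwise (· ≥ ·) := List.pairwise_cons.2 ⟨fun b hb => hMvg b hb, hvgs⟩
    have hterm : ∀ i : Fin n, term (f i).leadingCoeff (uu i) = f i := by
      intro i
      rw [term, ← hu2 i]
      exact C_leadingCoeff_mul_prod_multiset_X_sub_C (hf i).1
    have hFP : ((List.ofFn (fun i => ((f i).leadingCoeff, uu i))).map fun p => term p.1 p.2).sum
        = ∑ i, f i := by
      rw [List.map_ofFn]
      have he : ((fun p : ℝ × List ℝ => term p.1 p.2) ∘ fun i => ((f i).leadingCoeff, uu i))
          = fun i => term (f i).leadingCoeff (uu i) := rfl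
      rw [he, funext hterm]
      exact List.sum_ofFn
    have hPne : List.ofFn (fun i => ((f i).leadingCoeff, uu i)) ≠ [] := by
      simp only [ne_eq, List.ofFn_eq_nil_iff]
      omega
    have hPall : ∀ p ∈ List.ofFn (fun i => ((f i).leadingCoeff, uu i)),
        0 < p.1 ∧ p.2.Pairwise (· ≥ ·) ∧
        (p.2.length = (M :: vg).length ∨ p.2.length + 1 = (M :: vg).length) ∧
        Sq (M :: vg) p.2 := by
      intro p hp
      obtain ⟨i, rfl⟩ := List.mem_ofFn.1 hp
      refine ⟨(hf i).2, hu1 i, ?_, ?_, ?_⟩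
      · simp only [List.length_cons]
        rcases hu4 i with h | h <;> omega
      · -- upper : (uu i)[k] ≤ (M :: vg)[k]
        intro k h1 h2
        rcases Nat.eq_zero_or_pos k with rfl | hk
        · simp only [List.getElem_cons_zero]
          exact hMu i _ (List.getElem_mem h1)
        · obtain ⟨j, rfl⟩ : ∃ j, k = j + 1 := ⟨k - 1, by omega⟩
          simp only [List.getElem_cons_succ]
          have := hu6 i j h1 (by simp at h2; omega)
          exact this
      · -- lower : (M :: vg)[k+1] ≤ (uu i)[k]
        intro k h1 h2
        simp only [List.getElem_cons_succ]
        exact hu5 i k (by simp at h1; omega) h2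
    obtain ⟨hlcF, hdegF, hcardF, w, hwsort, hwroots, hwlen, hwsq⟩ :=
      master (M :: vg).length (M :: vg) rfl hUs _ hPne hPall
    rw [hFP] at hlcF hdegF hcardF hwroots hwlen
    refine ⟨hcardF, hlcF, hg.2, w, vg, hwsort, hvgs, hwroots, hgvg, hwlen, hvgl, ?_, ?_, ?_⟩
    · simp only [List.length_cons] at hdegF
      rcases hdegF with h | h
      · right; omega
      · left; omega
    · intro k h1 h2
      simp only [List.get_eq_getElem]
      have := hwsq.2 k (by simp; omega) h2
      simpa using this
    · intro k h1 h2
      simp only [List.get_eq_getElem]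
      have := hwsq.1 (k + 1) h1 (by simp; omega)
      simpa using this
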